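/- Let d ≥ 1, N ≥ 1, S : Finset (Fin N), and let X : Matrix (Fin N → Fin d) (Fin N → Fin d) ℂ with Matrix.rank X ≤ 2. Then ‖Tr_S(X)‖_F² ≤ 2 · ‖X‖_F². -/

import Mathlib

noncomputable def ptrace {N d : ℕ} (S : Finset (Fin N))
    (X : Matrix (Fin N → Fin d) (Fin N → Fin d) ℂ) :
    Matrix ({n // n ∈ Sᶜ} → Fin d) ({n // n ∈ Sᶜ} → Fin d) ℂ :=
  Matrix.of fun a b => ∑ e : {n // n ∈ S} → Fin d,
    X (fun n => if h : n ∈ S then e ⟨n, h⟩ else a ⟨n, Finset.mem_compl.mpr h⟩)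
      (fun n => if h : n ∈ S then e ⟨n, h⟩ else b ⟨n, Finset.mem_compl.mpr h⟩)

namespace PtraceAux

variable {N d : ℕ}

def merge (S : Finset (Fin N)) (a : {n // n ∈ Sᶜ} → Fin d) (e : {n // n ∈ S} → Fin d) :
    Fin N → Fin d :=
  fun n => if h : n ∈ S then e ⟨n, h⟩ else a ⟨n, Finset.mem_compl.mpr h⟩

def mergeEquiv (S : Finset (Fin N)) :
    (({n // n ∈ Sᶜ} → Fin d) × ({n // n ∈ S} → Fin d)) ≃ (Fin N → Fin d) where
  toFun p := merge S p.1 p.2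
  invFun f := (fun n => f n.1, fun n => f n.1)
  left_inv p := by
    ext n
    · have hn : ¬ (n : Fin N) ∈ S := Finset.mem_compl.mp n.2
      simp [merge, hn]
    · simp [merge, n.2]
  right_inv f := by
    funext n
    simp only [merge]
    split <;> rfl

lemma sum_merge (S : Finset (Fin N)) {M : Type*} [AddCommMonoid M]
    (F : (Fin N → Fin d) → M) :
    ∑ f : Fin N → Fin d, F f
      = ∑ a : {n // n ∈ Sᶜ} → Fin d, ∑ e : {n // n ∈ S} → Fin d, F (merge S a e) := by
  have h := Fintype.sum_equiv (mergeEquiv S) (fun p => F (merge S p.1 p.2)) F fun p => rfl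
  rw [← h, Fintype.sum_prod_type]

lemma outer_bound (S : Finset (Fin N)) (u w : (Fin N → Fin d) → ℂ) :
    ∑ a : {n // n ∈ Sᶜ} → Fin d, ∑ b : {n // n ∈ Sᶜ} → Fin d,
      ‖∑ e : {n // n ∈ S} → Fin d, u (merge S a e) * w (merge S b e)‖ ^ 2
    ≤ (∑ f, ‖u f‖ ^ 2) * (∑ f, ‖w f‖ ^ 2) := by
  have key : ∀ (a b : {n // n ∈ Sᶜ} → Fin d),
      ‖∑ e : {n // n ∈ S} → Fin d, u (merge S a e) * w (merge S b e)‖ ^ 2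
        ≤ (∑ e, ‖u (merge S a e)‖ ^ 2) * (∑ e, ‖w (merge S b e)‖ ^ 2) := by
    intro a b
    calc ‖∑ e : {n // n ∈ S} → Fin d, u (merge S a e) * w (merge S b e)‖ ^ 2
        ≤ (∑ e : {n // n ∈ S} → Fin d, ‖u (merge S a e)‖ * ‖w (merge S b e)‖) ^ 2 := by
          have h1 : ‖∑ e : {n // n ∈ S} → Fin d, u (merge S a e) * w (merge S b e)‖
              ≤ ∑ e : {n // n ∈ S} → Fin d, ‖u (merge S a e)‖ * ‖w (merge S b e)‖ := by
            refine (norm_sum_le _ _).trans ?_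
            exact Finset.sum_le_sum fun e _ => (norm_mul _ _).le
          exact pow_le_pow_left₀ (norm_nonneg _) h1 2
      _ ≤ _ := Finset.sum_mul_sq_le_sq_mul_sq _ _ _
  calc ∑ a : {n // n ∈ Sᶜ} → Fin d, ∑ b : {n // n ∈ Sᶜ} → Fin d,
        ‖∑ e : {n // n ∈ S} → Fin d, u (merge S a e) * w (merge S b e)‖ ^ 2
      ≤ ∑ a : {n // n ∈ Sᶜ} → Fin d, ∑ b : {n // n ∈ Sᶜ} → Fin d,
        (∑ e, ‖u (merge S a e)‖ ^ 2) * (∑ e, ‖w (merge S b e)‖ ^ 2) := by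
        refine Finset.sum_le_sum fun a _ => Finset.sum_le_sum fun b _ => key a b
    _ = (∑ f, ‖u f‖ ^ 2) * (∑ f, ‖w f‖ ^ 2) := by
        rw [sum_merge S (fun f => ‖u f‖ ^ 2), sum_merge S (fun f => ‖w f‖ ^ 2),
          Finset.sum_mul_sum]

end PtraceAux

open PtraceAux

theorem ptrace_frobenius_sq_le_two_mul
    (d N : ℕ) (hd : 1 ≤ d) (hN : 1 ≤ N) (S : Finset (Fin N))
    (X : Matrix (Fin N → Fin d) (Fin N → Fin d) ℂ)
    (hrank : X.rank ≤ 2) :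
    (∑ a : {n // n ∈ Sᶜ} → Fin d, ∑ b : {n // n ∈ Sᶜ} → Fin d, ‖ptrace S X a b‖ ^ 2)
      ≤ 2 * ∑ a : Fin N → Fin d, ∑ b : Fin N → Fin d, ‖X a b‖ ^ 2 := by
  classical
  set E := EuclideanSpace ℂ (Fin N → Fin d) with hE
  set W : Submodule ℂ E := Submodule.span ℂ (Set.range (fun b => WithLp.toLp 2 (X.transpose b) : _ → E)) with hW
  have hr : Module.finrank ℂ W ≤ 2 := by
    rw [Matrix.rank_eq_finrank_span_cols] at hrank
    have hWm : W = (Submodule.span ℂ (Set.range X.col)).map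
        (WithLp.linearEquiv 2 ℂ ((Fin N → Fin d) → ℂ)).symm.toLinearMap := by
      rw [Submodule.map_span, ← Set.range_comp]; rfl
    rw [hWm, LinearEquiv.finrank_map_eq]
    exact hrank
  set r := Module.finrank ℂ W with hrdef
  let bas : OrthonormalBasis (Fin r) ℂ W := stdOrthonormalBasis ℂ W
  let col : (Fin N → Fin d) → E := fun b => WithLp.toLp 2 (fun a => X a b)
  have hcol : ∀ b, col b ∈ W := fun b => Submodule.subset_span ⟨b, rfl⟩
  let colW : (Fin N → Fin d) → W := fun b => ⟨col b, hcol b⟩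
  let c : Fin r → (Fin N → Fin d) → ℂ := fun i b => bas.repr (colW b) i
  let u : Fin r → (Fin N → Fin d) → ℂ := fun i a => ((bas i : E) : (Fin N → Fin d) → ℂ) a
  -- expansion of entries
  have hX : ∀ a b, X a b = ∑ i, c i b * u i a := by
    intro a b
    have h1 : ∑ i, bas.repr (colW b) i • bas i = colW b := bas.sum_repr (colW b)
    have h2 : ((∑ i, bas.repr (colW b) i • bas i : W) : E) = col b := by rw [h1]
    have h3 : ((∑ i, bas.repr (colW b) i • bas i : W) : E)
        = ∑ i, bas.repr (colW b) i • ((bas i : W) : E) := by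
      push_cast
      rfl
    rw [h3] at h2
    have h4 := congrArg (fun v : E => v a) h2
    have h5 : (∑ i, bas.repr (colW b) i • ((bas i : W) : E)) a
        = ∑ i, bas.repr (colW b) i * (((bas i : W) : E) a) :=
      by rw [WithLp.ofLp_sum, Finset.sum_apply]; rfl
    rw [h5] at h4
    exact h4.symm
  -- Pythagoras for columns
  have hpyth : ∀ b, ∑ a, ‖X a b‖ ^ 2 = ∑ i, ‖c i b‖ ^ 2 := by
    intro b
    have h1 : ‖colW b‖ = ‖col b‖ := rfl
    have h2 : ‖col b‖ ^ 2 = ∑ a, ‖X a b‖ ^ 2 := by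
      rw [EuclideanSpace.norm_eq, Real.sq_sqrt (by positivity)]
    have h3 : ‖colW b‖ = ‖bas.repr (colW b)‖ := (bas.repr.norm_map (colW b)).symm
    have h4 : ‖bas.repr (colW b)‖ ^ 2 = ∑ i, ‖c i b‖ ^ 2 := by
      rw [EuclideanSpace.norm_eq, Real.sq_sqrt (by positivity)]
    rw [← h2, ← h4, h1.symm, h3]
  -- unit norm of basis vectors
  have hu : ∀ i, ∑ a, ‖u i a‖ ^ 2 = 1 := by
    intro i
    have h1 : ‖bas i‖ = 1 := bas.orthonormal.1 i
    have h2 : ‖bas i‖ = ‖(bas i : E)‖ := rfl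
    have h3 : ‖(bas i : E)‖ ^ 2 = ∑ a, ‖u i a‖ ^ 2 := by
      rw [EuclideanSpace.norm_eq, Real.sq_sqrt (by positivity)]
    rw [← h3, ← h2, h1, one_pow]
  -- ptrace entries
  have hpt : ∀ (a b : {n // n ∈ Sᶜ} → Fin d), ptrace S X a b
      = ∑ i, ∑ e : {n // n ∈ S} → Fin d, u i (merge S a e) * c i (merge S b e) := by
    intro a b
    have : ptrace S X a b = ∑ e : {n // n ∈ S} → Fin d, X (merge S a e) (merge S b e) := rfl
    rw [this]
    simp_rw [hX]
    rw [Finset.sum_comm]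
    exact Finset.sum_congr rfl fun i _ => Finset.sum_congr rfl fun e _ => mul_comm _ _
  -- pointwise bound
  have hptb : ∀ (a b : {n // n ∈ Sᶜ} → Fin d), ‖ptrace S X a b‖ ^ 2
      ≤ (r : ℝ) * ∑ i, ‖∑ e : {n // n ∈ S} → Fin d, u i (merge S a e) * c i (merge S b e)‖ ^ 2 := by
    intro a b
    rw [hpt a b]
    calc ‖∑ i, ∑ e : {n // n ∈ S} → Fin d, u i (merge S a e) * c i (merge S b e)‖ ^ 2
        ≤ (∑ i, ‖∑ e : {n // n ∈ S} → Fin d, u i (merge S a e) * c i (merge S b e)‖) ^ 2 :=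
          pow_le_pow_left₀ (norm_nonneg _) (norm_sum_le _ _) 2
      _ ≤ (r : ℝ) * ∑ i, ‖∑ e : {n // n ∈ S} → Fin d, u i (merge S a e) * c i (merge S b e)‖ ^ 2 := by
          simpa using sq_sum_le_card_mul_sum_sq
            (s := (Finset.univ : Finset (Fin r)))
            (f := fun i => ‖∑ e : {n // n ∈ S} → Fin d, u i (merge S a e) * c i (merge S b e)‖)
  calc (∑ a : {n // n ∈ Sᶜ} → Fin d, ∑ b : {n // n ∈ Sᶜ} → Fin d, ‖ptrace S X a b‖ ^ 2)
      ≤ ∑ a : {n // n ∈ Sᶜ} → Fin d, ∑ b : {n // n ∈ Sᶜ} → Fin d,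
          (r : ℝ) * ∑ i, ‖∑ e : {n // n ∈ S} → Fin d, u i (merge S a e) * c i (merge S b e)‖ ^ 2 :=
        Finset.sum_le_sum fun a _ => Finset.sum_le_sum fun b _ => hptb a b
    _ = (r : ℝ) * ∑ i, ∑ a : {n // n ∈ Sᶜ} → Fin d, ∑ b : {n // n ∈ Sᶜ} → Fin d,
          ‖∑ e : {n // n ∈ S} → Fin d, u i (merge S a e) * c i (merge S b e)‖ ^ 2 := by
        simp_rw [← Finset.mul_sum]
        congr 1
        exact (Finset.sum_congr rfl fun a _ => Finset.sum_comm).trans Finset.sum_comm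
    _ ≤ (r : ℝ) * ∑ i, (∑ f, ‖u i f‖ ^ 2) * (∑ f, ‖c i f‖ ^ 2) := by
        refine mul_le_mul_of_nonneg_left (Finset.sum_le_sum fun i _ => ?_) (by positivity)
        exact outer_bound S (u i) (c i)
    _ = (r : ℝ) * ∑ b : Fin N → Fin d, ∑ a : Fin N → Fin d, ‖X a b‖ ^ 2 := by
        congr 1
        simp_rw [hu, one_mul, hpyth]
        rw [Finset.sum_comm]
    _ ≤ 2 * ∑ a : Fin N → Fin d, ∑ b : Fin N → Fin d, ‖X a b‖ ^ 2 := by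
        rw [Finset.sum_comm]
        refine mul_le_mul_of_nonneg_right ?_ (by positivity)
        exact_mod_cast hr
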